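/- Let ι : C → D be a functor between small categories such that for every object d of D, each connected component of the under-category d ↓ ι has an initial object. Then for every functor M : C → Ab, the right Kan extension R_ι(M) : D → Ab satisfies R_ι(M)(d) ≅ ∏ M(c_0), the product running over the connected components of d ↓ ι, with (c_0, α_0) an initial object of the corresponding component. Consequently, R_ι is an exact functor from C-modules to D-modules. -/

import Mathlib

open CategoryTheory Limits

namespace RanExactAux

universe u

variable {C D : Type} [SmallCategory C] [SmallCategory D]

/-- connected component of a structured arrow -/
abbrev cmp (ι : C ⥤ D) (d : D) (y : StructuredArrow d ι) :
    ConnectedComponents (StructuredArrow d ι) :=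
  Quotient.mk (Zigzag.setoid (StructuredArrow d ι)) y

section

variable {ι : C ⥤ D} {d : D} {x₀ : ConnectedComponents (StructuredArrow d ι) → StructuredArrow d ι}

/-- the chosen map from the initial object of the component of `y` to `y` -/
noncomputable def u (hinit : ∀ i y, cmp ι d y = i → ∃! _ : (x₀ i ⟶ y), True)
    (y : StructuredArrow d ι) : x₀ (cmp ι d y) ⟶ y :=
  (hinit (cmp ι d y) y rfl).exists.choose

lemma uniq (hinit : ∀ i y, cmp ι d y = i → ∃! _ : (x₀ i ⟶ y), True)
    (i : ConnectedComponents (StructuredArrow d ι)) (y : StructuredArrow d ι)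
    (hy : cmp ι d y = i) (g g' : x₀ i ⟶ y) : g = g' :=
  (hinit i y hy).unique trivial trivial

lemma map_u_eq (hinit : ∀ i y, cmp ι d y = i → ∃! _ : (x₀ i ⟶ y), True)
    (M : C ⥤ AddCommGrpCat.{u}) {z : StructuredArrow d ι}
    (j : ConnectedComponents (StructuredArrow d ι)) (hj : j = cmp ι d z) (g : x₀ j ⟶ z)
    (v : ∀ i, M.obj ((x₀ i).right)) :
    M.map g.right (v j) = M.map ((u hinit z).right) (v (cmp ι d z)) := by
  subst hj
  rw [uniq hinit _ z rfl g (u hinit z)]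

lemma map_u_x₀ (hinit : ∀ i y, cmp ι d y = i → ∃! _ : (x₀ i ⟶ y), True)
    (hx₀ : ∀ i, cmp ι d (x₀ i) = i) (M : C ⥤ AddCommGrpCat.{u})
    (i : ConnectedComponents (StructuredArrow d ι)) (v : ∀ i, M.obj ((x₀ i).right)) :
    M.map ((u hinit (x₀ i)).right) (v (cmp ι d (x₀ i))) = v i := by
  suffices h : ∀ (j) (_ : j = i) (g : x₀ j ⟶ x₀ i), M.map g.right (v j) = v i from
    h _ (hx₀ i) (u hinit (x₀ i))
  rintro j rfl g
  rw [uniq hinit j (x₀ j) (hx₀ j) g (𝟙 _)]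
  simp

/-- the explicit limit cone -/
@[simps] noncomputable def myCone (hinit : ∀ i y, cmp ι d y = i → ∃! _ : (x₀ i ⟶ y), True)
    (M : C ⥤ AddCommGrpCat.{u}) :
    Cone (StructuredArrow.proj d ι ⋙ M) where
  pt := AddCommGrpCat.of (∀ i, M.obj ((x₀ i).right))
  π :=
    { app := fun y => AddCommGrpCat.ofHom
        { toFun := fun v => M.map ((u hinit y).right) (v (cmp ι d y))
          map_zero' := by simp; rfl
          map_add' := by intro v w; simp; rfl }
      naturality := fun y z f => by
        have h : cmp ι d y = cmp ι d z := Quotient.sound (Zigzag.of_hom f)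
        ext v
        simp only [comp_apply]
        show _ = M.map f.right (M.map ((u hinit y).right) _)
        rw [← comp_apply (M.map _) (M.map _), ← M.map_comp,
          ← StructuredArrow.comp_right (u hinit y) f,
          map_u_eq hinit M (cmp ι d y) h (u hinit y ≫ f) v]
        simp only [Functor.const_obj_map, Category.id_comp]
        rfl }

/-- the explicit cone is a limit cone -/
noncomputable def myIsLimit (hinit : ∀ i y, cmp ι d y = i → ∃! _ : (x₀ i ⟶ y), True)
    (hx₀ : ∀ i, cmp ι d (x₀ i) = i) (M : C ⥤ AddCommGrpCat.{u}) :
    IsLimit (myCone hinit M) where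
  lift s := AddCommGrpCat.ofHom
    { toFun := fun x i => s.π.app (x₀ i) x
      map_zero' := by funext i; simp; rfl
      map_add' := by intro a b; funext i; simp; rfl }
  fac s y := by
    ext x
    show M.map ((u hinit y).right) (s.π.app (x₀ (cmp ι d y)) x) = s.π.app y x
    rw [← s.w (u hinit y)]
    rfl
  uniq s m hm := by
    ext x
    funext i
    have := congrArg (fun (f : s.pt ⟶ _) => f x) (hm (x₀ i))
    simp only [comp_apply] at this
    change M.map ((u hinit (x₀ i)).right) ((m x) (cmp ι d (x₀ i))) = _ at this
    rw [map_u_x₀ hinit hx₀ M i (m x)] at this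
    exact this

/-- the pointwise product functor -/
@[simps] noncomputable def pif : (C ⥤ AddCommGrpCat.{u}) ⥤ AddCommGrpCat.{u} where
  obj M := AddCommGrpCat.of (∀ i, M.obj ((x₀ i).right))
  map {M N} φ := AddCommGrpCat.ofHom
    { toFun := fun v i => φ.app ((x₀ i).right) (v i)
      map_zero' := by funext i; simp
      map_add' := by intro a b; funext i; simp }
  map_id M := by ext v; rfl
  map_comp φ ψ := by ext v; rfl

instance : (pif.{u} (x₀ := x₀)).Additive where
  map_add := by intros; ext v; rfl

noncomputable instance : (pif.{u} (x₀ := x₀)).PreservesHomology := by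
  apply Functor.preservesHomology_of_map_exact
  intro S hS
  rw [ShortComplex.ab_exact_iff_ker_le_range]
  intro x hx
  have hex : ∀ i, ∃ a, S.f.app ((x₀ i).right) a = x i := by
    intro i
    have h := (hS.map ((evaluation C AddCommGrpCat.{u}).obj ((x₀ i).right)))
    rw [ShortComplex.ab_exact_iff_ker_le_range] at h
    exact h (congrFun hx i)
  choose a ha using hex
  exact ⟨a, funext ha⟩

noncomputable instance : PreservesFiniteColimits (pif.{u} (x₀ := x₀)) :=
  Functor.preservesFiniteColimits_of_preservesHomology _

/-- comparison natural transformation -/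
@[simps] noncomputable def eta (ι : C ⥤ D) [∀ F : C ⥤ AddCommGrpCat.{u}, ι.HasRightKanExtension F]
    (d : D) (x₀ : ConnectedComponents (StructuredArrow d ι) → StructuredArrow d ι) :
    (ι.ran ⋙ (evaluation D AddCommGrpCat.{u}).obj d) ⟶ pif.{u} (x₀ := x₀) where
  app M := AddCommGrpCat.ofHom
    { toFun := fun x i =>
        (ι.ranCounit.app M).app ((x₀ i).right) ((ι.ran.obj M).map (x₀ i).hom x)
      map_zero' := by funext i; simp
      map_add' := by intro a b; funext i; simp }
  naturality M N φ := by
    ext x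
    funext i
    show (ι.ranCounit.app N).app _ ((ι.ran.obj N).map (x₀ i).hom
        (((ι.ran.map φ).app d) x)) = φ.app _ ((ι.ranCounit.app M).app _
        ((ι.ran.obj M).map (x₀ i).hom x))
    have h2 : (ι.ran.map φ).app (ι.obj ((x₀ i).right)) ≫
        (ι.ranCounit.app N).app ((x₀ i).right) =
        (ι.ranCounit.app M).app ((x₀ i).right) ≫ φ.app ((x₀ i).right) := by
      have h := NatTrans.congr_app (ι.ranCounit.naturality φ) ((x₀ i).right)
      simpa using h
    have n1 : ((ι.ran.obj N).map (x₀ i).hom) (((ι.ran.map φ).app d) x) =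
        ((ι.ran.map φ).app (ι.obj ((x₀ i).right))) (((ι.ran.obj M).map (x₀ i).hom) x) :=
      (congrArg (fun (k : (ι.ran.obj M).obj d ⟶ (ι.ran.obj N).obj (ι.obj ((x₀ i).right))) =>
        k x) ((ι.ran.map φ).naturality (x₀ i).hom)).symm
    rw [n1]
    exact congrArg (fun (k : (ι.ran.obj M).obj (ι.obj ((x₀ i).right)) ⟶
      N.obj ((x₀ i).right)) => k (((ι.ran.obj M).map (x₀ i).hom) x)) h2

lemma eta_app_eq (ι : C ⥤ D) [∀ F : C ⥤ AddCommGrpCat.{u}, ι.HasRightKanExtension F]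
    (d : D) (x₀ : ConnectedComponents (StructuredArrow d ι) → StructuredArrow d ι)
    (hinit : ∀ i y, cmp ι d y = i → ∃! _ : (x₀ i ⟶ y), True)
    (hx₀ : ∀ i, cmp ι d (x₀ i) = i) (M : C ⥤ AddCommGrpCat.{u}) :
    (eta ι d x₀).app M = ((ι.ranObjObjIsoLimit M d) ≪≫
      limit.isoLimitCone ⟨myCone hinit M, myIsLimit hinit hx₀ M⟩).hom := by
  ext x
  funext i
  set iso := ((ι.ranObjObjIsoLimit M d) ≪≫
      limit.isoLimitCone ⟨myCone hinit M, myIsLimit hinit hx₀ M⟩) with hiso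
  have h1 : iso.hom ≫ (myCone hinit M).π.app (x₀ i) =
      (ι.ran.obj M).map (x₀ i).hom ≫ (ι.ranCounit.app M).app ((x₀ i).right) := by
    rw [hiso, Iso.trans_hom, Category.assoc, limit.isoLimitCone_hom_π,
      Functor.ranObjObjIsoLimit_hom_π]
  have h2 := congrArg (fun (f : (ι.ran.obj M).obj d ⟶ _) => f x) h1
  simp only [comp_apply] at h2
  change M.map ((u hinit (x₀ i)).right) ((iso.hom x) (cmp ι d (x₀ i))) = _ at h2
  rw [map_u_x₀ hinit hx₀ M i (iso.hom x)] at h2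
  exact h2.symm

lemma eta_isIso (ι : C ⥤ D) [∀ F : C ⥤ AddCommGrpCat.{u}, ι.HasRightKanExtension F]
    (d : D) (x₀ : ConnectedComponents (StructuredArrow d ι) → StructuredArrow d ι)
    (hinit : ∀ i y, cmp ι d y = i → ∃! _ : (x₀ i ⟶ y), True)
    (hx₀ : ∀ i, cmp ι d (x₀ i) = i) : IsIso (eta ι d x₀) := by
  have : ∀ M, IsIso ((eta ι d x₀).app M) := by
    intro M
    rw [eta_app_eq ι d x₀ hinit hx₀ M]
    exact Iso.isIso_hom _
  exact NatIso.isIso_of_isIso_app _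

end

end RanExactAux

/-- Let `ι : C ⥤ D` be a functor between small categories such that for
every `d : D` each connected component of the under-category `d ↓ ι` (structured arrows
from `d` to `ι`) has an initial object.  Then for every `M : C ⥤ Ab` the right Kan
extension `R_ι M` satisfies `(R_ι M)(d) ≅ ∏ M(c₀)`, the product running over the connected
components of `d ↓ ι` with `(c₀, α₀)` an initial object of the corresponding component;
consequently `R_ι` is an exact functor. -/
theorem ran_obj_iso_pi_initial_and_exact
    {C D : Type} [SmallCategory C] [SmallCategory D] (ι : C ⥤ D)
    [∀ F : C ⥤ AddCommGrpCat, ι.HasRightKanExtension F]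
    (x₀ : ∀ d : D, ConnectedComponents (StructuredArrow d ι) → StructuredArrow d ι)
    (hx₀ : ∀ (d : D) (i : ConnectedComponents (StructuredArrow d ι)),
      Quotient.mk (Zigzag.setoid (StructuredArrow d ι)) (x₀ d i) = i)
    (hinit : ∀ (d : D) (i : ConnectedComponents (StructuredArrow d ι))
      (y : StructuredArrow d ι),
        Quotient.mk (Zigzag.setoid (StructuredArrow d ι)) y = i →
          ∃! _ : (x₀ d i ⟶ y), True) :
    (∀ (M : C ⥤ AddCommGrpCat) (d : D),
        Nonempty (((ι.ran.obj M).obj d : AddCommGrpCat) ≃+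
          ((i : ConnectedComponents (StructuredArrow d ι)) → M.obj ((x₀ d i).right)))) ∧
      Nonempty (PreservesFiniteLimits (ι.ran : (C ⥤ AddCommGrpCat) ⥤ D ⥤ AddCommGrpCat)) ∧
      Nonempty (PreservesFiniteColimits (ι.ran : (C ⥤ AddCommGrpCat) ⥤ D ⥤ AddCommGrpCat)) := by
  refine ⟨?_, ?_, ?_⟩
  · intro M d
    exact ⟨((ι.ranObjObjIsoLimit M d) ≪≫ limit.isoLimitCone
      ⟨RanExactAux.myCone (hinit d) M, RanExactAux.myIsLimit (hinit d) (hx₀ d) M⟩).addCommGroupIsoToAddEquiv⟩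
  · exact ⟨letI := (ι.ranAdjunction AddCommGrpCat).rightAdjoint_preservesLimits
      PreservesLimitsOfSize.preservesFiniteLimits.{0, 0} _⟩
  · refine ⟨preservesFiniteColimits_of_evaluation _ fun d => ?_⟩
    haveI := RanExactAux.eta_isIso ι d (x₀ d) (hinit d) (hx₀ d)
    exact preservesFiniteColimits_of_natIso (asIso (RanExactAux.eta ι d (x₀ d))).symm
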